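/- Fix a boundary condition τ ∈ {−1,1}^{Z^d} and let μ be any weak limit point of the finite-volume stationary measures ν_Λ^τ (extended to {−1,1}^{Z^d} by τ outside Λ) as Λ ↑ Z^d. Then μ is a Gibbs measure for the shift-invariant potential Φ given by Φ_{{i}}(σ) = −βh σ_i, Φ_{U_i}(σ) = −log cosh(β Σ_j k(i−j)σ_j + βh) where U_i = {j : k(i−j) ≠ 0}, and Φ_A = 0 for all other finite A ⊂ Z^d. -/

import Mathlib

open MeasureTheory Filter

namespace PCA

noncomputable section

/-- Sites of the lattice `ℤ^d`. -/
abbrev Site (d : ℕ) := Fin d → ℤ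

/-- Spin configurations on `ℤ^d` with spins in `{-1,1}` encoded by `Bool`. -/
abbrev Conf (d : ℕ) := Site d → Bool

/-- The real value of a spin: `true ↦ 1`, `false ↦ -1`. -/
def val (b : Bool) : ℝ := if b then 1 else -1

/-- Squared Euclidean norm of a site. -/
def normSq {d : ℕ} (i : Site d) : ℤ := ∑ t, (i t) ^ 2

/-- The local field `Σ_j k(i-j) η_j`. -/
def field {d : ℕ} (k : Site d → ℝ) (i : Site d) (η : Conf d) : ℝ :=
  ∑' j : Site d, k (i - j) * val (η j)

/-- Single site updating probability
`p_i(s|η) = (1 + s tanh(β Σ_j k(i-j) η_j + β h))/2`. -/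
def pval {d : ℕ} (β h : ℝ) (k : Site d → ℝ) (i : Site d) (s : Bool) (η : Conf d) : ℝ :=
  (1 + val s * Real.tanh (β * field k i η + β * h)) / 2

/-- The configuration equal to `a` on `Λ` and to `τ` outside `Λ`. -/
def fill {d : ℕ} (Λ : Finset (Site d)) (a : ↥Λ → Bool) (τ : Conf d) : Conf d :=
  fun j => if h : j ∈ Λ then a ⟨j, h⟩ else τ j

/-- Finite volume PCA transition probability with boundary condition `τ`:
`P_Λ^τ(σ|η) = ∏_{i ∈ Λ} p_i(σ_i | η_Λ τ_{Λ^c})`. -/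
def Pfin {d : ℕ} (β h : ℝ) (k : Site d → ℝ) (Λ : Finset (Site d)) (τ : Conf d)
    (σ η : ↥Λ → Bool) : ℝ :=
  ∏ i : ↥Λ, pval β h k i.1 (σ i) (fill Λ η τ)

/-- The boundary field `Σ_{j ∈ Λ^c} k(i-j) τ_j`. -/
def outField {d : ℕ} (k : Site d → ℝ) (Λ : Finset (Site d)) (τ : Conf d) (i : Site d) : ℝ :=
  ∑' j : Site d, if j ∈ Λ then 0 else k (i - j) * val (τ j)

/-- Unnormalized stationary measure of the finite volume PCA:
`∏_{i∈Λ} e^{βhσ_i} cosh(β Σ_j k(i-j) σ̃_j + βh) e^{β σ_i Σ_{j∈Λ^c} k(i-j) τ_j}`. -/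
def nuNum {d : ℕ} (β h : ℝ) (k : Site d → ℝ) (Λ : Finset (Site d)) (τ : Conf d)
    (σ : ↥Λ → Bool) : ℝ :=
  ∏ i : ↥Λ,
    Real.exp (β * h * val (σ i))
      * Real.cosh (β * field k i.1 (fill Λ σ τ) + β * h)
      * Real.exp (β * val (σ i) * outField k Λ τ i.1)

/-- The normalized stationary measure `ν_Λ^τ`. -/
def nu {d : ℕ} (β h : ℝ) (k : Site d → ℝ) (Λ : Finset (Site d)) (τ : Conf d)
    (σ : ↥Λ → Bool) : ℝ :=
  nuNum β h k Λ τ σ / ∑ σ' : ↥Λ → Bool, nuNum β h k Λ τ σ'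


/-- The cylinder set of configurations agreeing with `a` on `Λ`. -/
def cylB {d : ℕ} (Λ : Finset (Site d)) (a : ↥Λ → Bool) : Set (Conf d) :=
  {σ : Conf d | ∀ j : ↥Λ, σ j.1 = a j}

/-- `P` is the (infinite volume) PCA kernel with single site probabilities `pval β h k`:
on every cylinder, `P(·|η)` is the product of the single site probabilities. -/
def IsPCAB {d : ℕ} (β h : ℝ) (k : Site d → ℝ)
    (P : ProbabilityTheory.Kernel (Conf d) (Conf d)) : Prop :=
  ∀ (η : Conf d) (Λ : Finset (Site d)) (a : ↥Λ → Bool),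
    P η (cylB Λ a) = ∏ j : ↥Λ, ENNReal.ofReal (pval β h k j.1 (a j) η)

/-- The Hamiltonian `H_Λ^τ(a) = Σ_{A ∩ Λ ≠ ∅} Φ_A(a_Λ τ_{Λ^c})` for the potential
`Φ_{{i}}(σ) = -βhσ_i`, `Φ_{U_i}(σ) = -log cosh(β Σ_j k(i-j)σ_j + βh)`,
`U_i = {j : k(i-j) ≠ 0}`, and `Φ_A = 0` otherwise. -/
def hamB {d : ℕ} (β h : ℝ) (k : Site d → ℝ) (Λ : Finset (Site d)) (a : ↥Λ → Bool)
    (τ : Conf d) : ℝ :=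
  (∑ i : ↥Λ, -(β * h * val (a i))) +
    ∑' i : Site d,
      Set.indicator {i : Site d | ∃ j ∈ Λ, k (i - j) ≠ 0}
        (fun i => -Real.log (Real.cosh (β * field k i (fill Λ a τ) + β * h))) i

/-- The finite volume Gibbs weight `μ_Λ^τ(a) = exp(-H_Λ^τ(a))/Z_Λ^τ`. -/
def gibbsWB {d : ℕ} (β h : ℝ) (k : Site d → ℝ) (Λ : Finset (Site d)) (a : ↥Λ → Bool)
    (τ : Conf d) : ℝ :=
  Real.exp (-hamB β h k Λ a τ) / ∑ b : ↥Λ → Bool, Real.exp (-hamB β h k Λ b τ)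

/-- The σ-algebra generated by the spins outside `Λ`. -/
def outer {d : ℕ} (Λ : Finset (Site d)) : MeasurableSpace (Conf d) :=
  MeasurableSpace.comap (fun σ (j : {j : Site d // j ∉ Λ}) => σ j.1) MeasurableSpace.pi

/-- `μ` is a Gibbs measure for the potential associated to `β`, `h`, `k` (DLR equations):
for every finite `Λ`, conditionally on the configuration outside `Λ`, the configuration
on `Λ` is distributed according to the finite volume Gibbs measure. -/
def IsGibbsB {d : ℕ} (β h : ℝ) (k : Site d → ℝ) (μ : Measure (Conf d)) : Prop :=
  ∀ (Λ : Finset (Site d)) (a : ↥Λ → Bool) (B : Set (Conf d)),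
    MeasurableSet[outer Λ] B →
    μ (cylB Λ a ∩ B) = ∫⁻ τ in B, ENNReal.ofReal (gibbsWB β h k Λ a τ) ∂μ

/-- The centered hypercube `[-n,n]^d ∩ ℤ^d`. -/
def boxCc {d : ℕ} (n : ℕ) : Finset (Site d) :=
  Fintype.piFinset fun _ => Finset.Icc (-(n : ℤ)) (n : ℤ)

/-- A local function on configuration space: it depends on finitely many spins. -/
def LocalFun {d : ℕ} (f : Conf d → ℝ) : Prop :=
  ∃ Δ : Finset (Site d), ∀ σ σ' : Conf d, (∀ j ∈ Δ, σ j = σ' j) → f σ = f σ'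

/-- The finite volume stationary measure `ν_Λ^τ` viewed as a probability measure on the
whole configuration space, extending configurations by `τ` outside `Λ`. -/
def nuMeas {d : ℕ} (β h : ℝ) (k : Site d → ℝ) (Λ : Finset (Site d)) (τ : Conf d) :
    Measure (Conf d) :=
  ∑ a : ↥Λ → Bool, ENNReal.ofReal (nu β h k Λ τ a) • Measure.dirac (fill Λ a τ)

/-! ### Auxiliary development -/

section Aux

open Finset in
theorem fill_apply_mem {d : ℕ} {Λ : Finset (Site d)} (a : ↥Λ → Bool) (τ : Conf d)
    {j : Site d} (hj : j ∈ Λ) : fill Λ a τ j = a ⟨j, hj⟩ := by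
  simp [fill, hj]

theorem fill_apply_not_mem {d : ℕ} {Λ : Finset (Site d)} (a : ↥Λ → Bool) (τ : Conf d)
    {j : Site d} (hj : j ∉ Λ) : fill Λ a τ j = τ j := by
  simp [fill, hj]

variable {d : ℕ} {k : Site d → ℝ} {K : Finset (Site d)} (hK : ∀ i, i ∉ K → k i = 0)

/-- The sites `j` whose spin can influence the field at `i`. -/
def Jset (K : Finset (Site d)) (i : Site d) : Finset (Site d) := K.image (fun s => i - s)

theorem mem_Jset {i j : Site d} : j ∈ Jset K i ↔ i - j ∈ K := by
  constructor
  · rintro hj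
    rcases Finset.mem_image.1 hj with ⟨s, hs, rfl⟩
    simpa using hs
  · intro hj
    exact Finset.mem_image.2 ⟨i - j, hj, by abel⟩

include hK in
theorem k_eq_zero_of_not_mem_Jset {i j : Site d} (hj : j ∉ Jset K i) : k (i - j) = 0 :=
  hK _ (fun hc => hj (mem_Jset.2 hc))

include hK in
theorem field_eq_sum (i : Site d) (η : Conf d) :
    field k i η = ∑ j ∈ Jset K i, k (i - j) * val (η j) := by
  refine tsum_eq_sum ?_
  intro j hj
  rw [k_eq_zero_of_not_mem_Jset hK hj, zero_mul]

include hK in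
theorem field_congr {i : Site d} {η η' : Conf d}
    (hagree : ∀ j ∈ Jset K i, η j = η' j) : field k i η = field k i η' := by
  rw [field_eq_sum hK, field_eq_sum hK]
  exact Finset.sum_congr rfl fun j hj => by rw [hagree j hj]

include hK in
theorem outField_eq_zero {Λ : Finset (Site d)} (τ : Conf d) {i : Site d}
    (hsub : Jset K i ⊆ Λ) : outField k Λ τ i = 0 := by
  have : ∀ j : Site d, (if j ∈ Λ then 0 else k (i - j) * val (τ j)) = 0 := by
    intro j
    by_cases hj : j ∈ Λ
    · simp [hj]
    · have : j ∉ Jset K i := fun hc => hj (hsub hc)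
      simp [hj, k_eq_zero_of_not_mem_Jset hK this]
  simp only [outField, this, tsum_zero]

open Classical in
/-- The finite set of sites whose `cosh` potential involves spins in `Λ`. -/
def SSet (k : Site d → ℝ) (K Λ : Finset (Site d)) : Finset (Site d) :=
  (Λ.biUnion fun j => K.image (fun s => s + j)).filter (fun i => ∃ j ∈ Λ, k (i - j) ≠ 0)

include hK in
open Classical in
theorem mem_SSet {Λ : Finset (Site d)} {i : Site d} :
    i ∈ SSet k K Λ ↔ ∃ j ∈ Λ, k (i - j) ≠ 0 := by
  classical
  constructor
  · intro hi
    exact (Finset.mem_filter.1 hi).2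
  · rintro ⟨j, hj, hkj⟩
    refine Finset.mem_filter.2 ⟨?_, ⟨j, hj, hkj⟩⟩
    refine Finset.mem_biUnion.2 ⟨j, hj, ?_⟩
    refine Finset.mem_image.2 ⟨i - j, ?_, by abel⟩
    by_contra hc
    exact hkj (hK _ hc)

include hK in
theorem hamB_eq_sum (β h : ℝ) (Λ : Finset (Site d)) (a : ↥Λ → Bool) (τ : Conf d) :
    hamB β h k Λ a τ = (∑ i : ↥Λ, -(β * h * val (a i))) +
      ∑ i ∈ SSet k K Λ, -Real.log (Real.cosh (β * field k i (fill Λ a τ) + β * h)) := by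
  classical
  unfold hamB
  congr 1
  rw [tsum_eq_sum (s := SSet k K Λ)]
  · refine Finset.sum_congr rfl fun i hi => ?_
    have hmem : i ∈ {i : Site d | ∃ j ∈ Λ, k (i - j) ≠ 0} := (mem_SSet hK).1 hi
    simp only [Set.indicator_apply, if_pos hmem]
  · intro i hi
    have hmem : i ∉ {i : Site d | ∃ j ∈ Λ, k (i - j) ≠ 0} := fun hc => hi ((mem_SSet hK).2 hc)
    simp only [Set.indicator_apply, if_neg hmem]

end Aux
section Aux2

variable {d : ℕ} {k : Site d → ℝ} {K : Finset (Site d)}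

/-- Glue a configuration on `Λ` with one on `Λ' \ Λ`. -/
def glue {Λ Λ' : Finset (Site d)} (hsub : Λ ⊆ Λ') (a : ↥Λ → Bool)
    (c : ↥(Λ' \ Λ) → Bool) : ↥Λ' → Bool :=
  fun i => if h : i.1 ∈ Λ then a ⟨i.1, h⟩ else c ⟨i.1, Finset.mem_sdiff.2 ⟨i.2, h⟩⟩

theorem fill_glue_mem {Λ Λ' : Finset (Site d)} (hsub : Λ ⊆ Λ') (a : ↥Λ → Bool)
    (c : ↥(Λ' \ Λ) → Bool) (τ : Conf d) {j : Site d} (hj : j ∈ Λ) :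
    fill Λ' (glue hsub a c) τ j = a ⟨j, hj⟩ := by
  rw [fill_apply_mem _ _ (hsub hj)]
  simp [glue, hj]

theorem fill_glue_sdiff {Λ Λ' : Finset (Site d)} (hsub : Λ ⊆ Λ') (a : ↥Λ → Bool)
    (c : ↥(Λ' \ Λ) → Bool) (τ : Conf d) {j : Site d} (hj : j ∈ Λ' \ Λ) :
    fill Λ' (glue hsub a c) τ j = c ⟨j, hj⟩ := by
  have h1 : j ∈ Λ' := (Finset.mem_sdiff.1 hj).1
  have h2 : j ∉ Λ := (Finset.mem_sdiff.1 hj).2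
  rw [fill_apply_mem _ _ h1]
  simp [glue, h2]

theorem fill_glue_not_mem {Λ Λ' : Finset (Site d)} (hsub : Λ ⊆ Λ') (a : ↥Λ → Bool)
    (c : ↥(Λ' \ Λ) → Bool) (τ : Conf d) {j : Site d} (hj : j ∉ Λ') :
    fill Λ' (glue hsub a c) τ j = τ j := fill_apply_not_mem _ _ hj

theorem fill_fill_glue {Λ Λ' : Finset (Site d)} (hsub : Λ ⊆ Λ') (a b : ↥Λ → Bool)
    (c : ↥(Λ' \ Λ) → Bool) (τ : Conf d) :
    fill Λ b (fill Λ' (glue hsub a c) τ) = fill Λ' (glue hsub b c) τ := by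
  funext j
  by_cases hj : j ∈ Λ
  · rw [fill_apply_mem _ _ hj, fill_glue_mem hsub b c τ hj]
  · rw [fill_apply_not_mem _ _ hj]
    by_cases hj' : j ∈ Λ'
    · rw [fill_glue_sdiff hsub a c τ (Finset.mem_sdiff.2 ⟨hj', hj⟩),
        fill_glue_sdiff hsub b c τ (Finset.mem_sdiff.2 ⟨hj', hj⟩)]
    · rw [fill_glue_not_mem hsub a c τ hj', fill_glue_not_mem hsub b c τ hj']

/-- The splitting equivalence for configurations on `Λ'`. -/
def glueEquiv {Λ Λ' : Finset (Site d)} (hsub : Λ ⊆ Λ') :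
    ((↥Λ → Bool) × (↥(Λ' \ Λ) → Bool)) ≃ (↥Λ' → Bool) where
  toFun p := glue hsub p.1 p.2
  invFun b := (fun i => b ⟨i.1, hsub i.2⟩, fun i => b ⟨i.1, (Finset.mem_sdiff.1 i.2).1⟩)
  left_inv p := by
    ext i
    · simp [glue, i.2]
    · have : i.1 ∉ Λ := (Finset.mem_sdiff.1 i.2).2
      simp [glue, this]
  right_inv b := by
    funext i
    by_cases hi : i.1 ∈ Λ <;> simp [glue, hi]

theorem sum_glue {Λ Λ' : Finset (Site d)} (hsub : Λ ⊆ Λ') (f : (↥Λ' → Bool) → ℝ) :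
    ∑ b : ↥Λ' → Bool, f b
      = ∑ a : ↥Λ → Bool, ∑ c : ↥(Λ' \ Λ) → Bool, f (glue hsub a c) := by
  rw [← Equiv.sum_comp (glueEquiv hsub) f, Fintype.sum_prod_type]
  rfl

variable (hK : ∀ i, i ∉ K → k i = 0)

include hK in
theorem exp_neg_hamB (β h : ℝ) (Λ : Finset (Site d)) (a : ↥Λ → Bool) (τ : Conf d) :
    Real.exp (-hamB β h k Λ a τ)
      = (∏ i ∈ Λ, Real.exp (β * h * val (fill Λ a τ i)))
        * ∏ i ∈ SSet k K Λ, Real.cosh (β * field k i (fill Λ a τ) + β * h) := by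
  rw [hamB_eq_sum hK, neg_add, Real.exp_add]
  congr 1
  · rw [← Finset.sum_neg_distrib]
    simp only [neg_neg]
    rw [Real.exp_sum]
    rw [← Finset.prod_coe_sort Λ (fun i => Real.exp (β * h * val (fill Λ a τ i)))]
    refine Finset.prod_congr rfl fun i _ => ?_
    rw [fill_apply_mem a τ i.2]
  · rw [← Finset.sum_neg_distrib]
    simp only [neg_neg]
    rw [Real.exp_sum]
    refine Finset.prod_congr rfl fun i _ => ?_
    exact Real.exp_log (Real.cosh_pos _)

theorem hamB_congr_fill (β h : ℝ) (Λ : Finset (Site d)) (b : ↥Λ → Bool) {τ₁ τ₂ : Conf d}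
    (hf : fill Λ b τ₁ = fill Λ b τ₂) : hamB β h k Λ b τ₁ = hamB β h k Λ b τ₂ := by
  unfold hamB
  rw [hf]

theorem nuNum_pos (β h : ℝ) (Λ : Finset (Site d)) (τ : Conf d) (b : ↥Λ → Bool) :
    0 < nuNum β h k Λ τ b := by
  refine Finset.prod_pos fun i _ => ?_
  positivity

theorem nuNum_sum_pos (β h : ℝ) (Λ : Finset (Site d)) (τ : Conf d) :
    0 < ∑ b : ↥Λ → Bool, nuNum β h k Λ τ b :=
  Finset.sum_pos (fun b _ => nuNum_pos β h Λ τ b) Finset.univ_nonempty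

theorem nu_nonneg (β h : ℝ) (Λ : Finset (Site d)) (τ : Conf d) (b : ↥Λ → Bool) :
    0 ≤ nu β h k Λ τ b :=
  div_nonneg (nuNum_pos β h Λ τ b).le (nuNum_sum_pos β h Λ τ).le

theorem gibbsWB_nonneg (β h : ℝ) (Λ : Finset (Site d)) (a : ↥Λ → Bool) (τ : Conf d) :
    0 ≤ gibbsWB β h k Λ a τ := by
  unfold gibbsWB
  have hD : 0 < ∑ b : ↥Λ → Bool, Real.exp (-hamB β h k Λ b τ) :=
    Finset.sum_pos (fun b _ => Real.exp_pos _) Finset.univ_nonempty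
  positivity

theorem gibbsWB_le_one (β h : ℝ) (Λ : Finset (Site d)) (a : ↥Λ → Bool) (τ : Conf d) :
    gibbsWB β h k Λ a τ ≤ 1 := by
  unfold gibbsWB
  have hD : 0 < ∑ b : ↥Λ → Bool, Real.exp (-hamB β h k Λ b τ) :=
    Finset.sum_pos (fun b _ => Real.exp_pos _) Finset.univ_nonempty
  rw [div_le_one hD]
  exact Finset.single_le_sum (f := fun b => Real.exp (-hamB β h k Λ b τ))
    (fun b _ => (Real.exp_pos _).le) (Finset.mem_univ a)

end Aux2
section Aux3

variable {d : ℕ} {k : Site d → ℝ} {K : Finset (Site d)} (hK : ∀ i, i ∉ K → k i = 0)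

include hK in
theorem field_eq_of_agree_outside {Λ : Finset (Site d)} {i : Site d}
    (hi : ∀ j ∈ Λ, k (i - j) = 0) {η η' : Conf d}
    (hagree : ∀ j, j ∉ Λ → η j = η' j) : field k i η = field k i η' := by
  rw [field_eq_sum hK, field_eq_sum hK]
  refine Finset.sum_congr rfl fun j hj => ?_
  by_cases hjΛ : j ∈ Λ
  · rw [hi j hjΛ]; ring
  · rw [hagree j hjΛ]

/-- The part of `nuNum` not depending on the configuration inside `Λ`. -/
def restC (β h : ℝ) (k : Site d → ℝ) (K : Finset (Site d)) {Λ Λ' : Finset (Site d)}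
    (hsub : Λ ⊆ Λ') (τ : Conf d) (c : ↥(Λ' \ Λ) → Bool) : ℝ :=
  (∏ i ∈ Λ' \ Λ, Real.exp (β * h * val (fill Λ' (glue hsub (fun _ => false) c) τ i))
      * Real.exp (β * val (fill Λ' (glue hsub (fun _ => false) c) τ i) * outField k Λ' τ i))
    * ∏ i ∈ Λ' \ SSet k K Λ,
        Real.cosh (β * field k i (fill Λ' (glue hsub (fun _ => false) c) τ) + β * h)

include hK in
set_option maxHeartbeats 1000000 in
theorem nuNum_glue_eq (β h : ℝ) {Λ Λ' : Finset (Site d)} (hsub : Λ ⊆ Λ')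
    (hS : SSet k K Λ ⊆ Λ') (hJ : ∀ i ∈ Λ, Jset K i ⊆ Λ') (τ : Conf d)
    (a : ↥Λ → Bool) (c : ↥(Λ' \ Λ) → Bool) :
    nuNum β h k Λ' τ (glue hsub a c)
      = Real.exp (-hamB β h k Λ a (fill Λ' (glue hsub a c) τ)) * restC β h k K hsub τ c := by
  classical
  set σ := fill Λ' (glue hsub a c) τ with hσ
  set ρ := fill Λ' (glue hsub (fun _ => false) c) τ with hρ
  have hagree : ∀ j, j ∉ Λ → σ j = ρ j := by
    intro j hj
    by_cases hj' : j ∈ Λ'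
    · rw [hσ, hρ, fill_glue_sdiff hsub a c τ (Finset.mem_sdiff.2 ⟨hj', hj⟩),
        fill_glue_sdiff hsub _ c τ (Finset.mem_sdiff.2 ⟨hj', hj⟩)]
    · rw [hσ, hρ, fill_glue_not_mem hsub a c τ hj', fill_glue_not_mem hsub _ c τ hj']
  have hfill : fill Λ a σ = σ := by
    funext j
    by_cases hj : j ∈ Λ
    · rw [fill_apply_mem _ _ hj, hσ, fill_glue_mem hsub a c τ hj]
    · rw [fill_apply_not_mem _ _ hj]
  -- rewrite the Hamiltonian factor
  have hham : Real.exp (-hamB β h k Λ a σ)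
      = (∏ i ∈ Λ, Real.exp (β * h * val (σ i)))
        * ∏ i ∈ SSet k K Λ, Real.cosh (β * field k i σ + β * h) := by
    rw [exp_neg_hamB hK, hfill]
  -- rewrite nuNum as a product over the finset Λ'
  have hnu : nuNum β h k Λ' τ (glue hsub a c)
      = ∏ i ∈ Λ', (Real.exp (β * h * val (σ i))
          * Real.cosh (β * field k i σ + β * h)
          * Real.exp (β * val (σ i) * outField k Λ' τ i)) := by
    unfold nuNum
    rw [← Finset.prod_coe_sort Λ' (fun i => Real.exp (β * h * val (σ i))
          * Real.cosh (β * field k i σ + β * h)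
          * Real.exp (β * val (σ i) * outField k Λ' τ i))]
    refine Finset.prod_congr rfl fun i _ => ?_
    have : glue hsub a c i = σ i.1 := (fill_apply_mem _ τ i.2).symm
    rw [this, hσ]
  rw [hnu, Finset.prod_mul_distrib, Finset.prod_mul_distrib]
  -- split each product
  have hA : ∏ i ∈ Λ', Real.exp (β * h * val (σ i))
      = (∏ i ∈ Λ' \ Λ, Real.exp (β * h * val (ρ i))) * ∏ i ∈ Λ, Real.exp (β * h * val (σ i)) := by
    rw [← Finset.prod_sdiff hsub]
    congr 1
    refine Finset.prod_congr rfl fun i hi => ?_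
    rw [hagree i (Finset.mem_sdiff.1 hi).2]
  have hB : ∏ i ∈ Λ', Real.cosh (β * field k i σ + β * h)
      = (∏ i ∈ Λ' \ SSet k K Λ, Real.cosh (β * field k i ρ + β * h))
        * ∏ i ∈ SSet k K Λ, Real.cosh (β * field k i σ + β * h) := by
    rw [← Finset.prod_sdiff hS]
    congr 1
    refine Finset.prod_congr rfl fun i hi => ?_
    have hiS : i ∉ SSet k K Λ := (Finset.mem_sdiff.1 hi).2
    have hzero : ∀ j ∈ Λ, k (i - j) = 0 := by
      intro j hj
      by_contra hc
      exact hiS ((mem_SSet hK).2 ⟨j, hj, hc⟩)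
    rw [field_eq_of_agree_outside hK hzero hagree]
  have hC : ∏ i ∈ Λ', Real.exp (β * val (σ i) * outField k Λ' τ i)
      = ∏ i ∈ Λ' \ Λ, Real.exp (β * val (ρ i) * outField k Λ' τ i) := by
    rw [← Finset.prod_sdiff hsub]
    have h1 : ∏ i ∈ Λ, Real.exp (β * val (σ i) * outField k Λ' τ i) = 1 := by
      refine Finset.prod_eq_one fun i hi => ?_
      rw [outField_eq_zero hK τ (hJ i hi), mul_zero, Real.exp_zero]
    rw [h1, mul_one]
    refine Finset.prod_congr rfl fun i hi => ?_
    rw [hagree i (Finset.mem_sdiff.1 hi).2]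
  rw [hA, hB, hC, hham]
  unfold restC
  rw [Finset.prod_mul_distrib, ← hρ]
  ring

include hK in
theorem gibbsWB_mul_sum (β h : ℝ) {Λ Λ' : Finset (Site d)} (hsub : Λ ⊆ Λ')
    (hS : SSet k K Λ ⊆ Λ') (hJ : ∀ i ∈ Λ, Jset K i ⊆ Λ') (τ : Conf d)
    (a : ↥Λ → Bool) (c : ↥(Λ' \ Λ) → Bool) :
    (∑ a' : ↥Λ → Bool, nuNum β h k Λ' τ (glue hsub a' c))
        * gibbsWB β h k Λ a (fill Λ' (glue hsub a c) τ)
      = nuNum β h k Λ' τ (glue hsub a c) := by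
  set τ' := fill Λ' (glue hsub a c) τ with hτ'
  have hden : ∀ b : ↥Λ → Bool,
      hamB β h k Λ b τ' = hamB β h k Λ b (fill Λ' (glue hsub b c) τ) := by
    intro b
    refine hamB_congr_fill β h Λ b ?_
    rw [hτ', fill_fill_glue hsub a b c τ, fill_fill_glue hsub b b c τ]
  have hsum : ∑ a' : ↥Λ → Bool, nuNum β h k Λ' τ (glue hsub a' c)
      = (∑ b : ↥Λ → Bool, Real.exp (-hamB β h k Λ b τ')) * restC β h k K hsub τ c := by
    rw [Finset.sum_mul]
    refine Finset.sum_congr rfl fun a' _ => ?_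
    rw [nuNum_glue_eq hK β h hsub hS hJ τ a' c, hden a']
  have hpos : (0:ℝ) < ∑ b : ↥Λ → Bool, Real.exp (-hamB β h k Λ b τ') :=
    Finset.sum_pos (fun b _ => Real.exp_pos _) Finset.univ_nonempty
  rw [hsum, nuNum_glue_eq hK β h hsub hS hJ τ a c, ← hden a]
  unfold gibbsWB
  field_simp

end Aux3
section Aux4

variable {d : ℕ}

instance confMSC : MeasurableSingletonClass (Conf d) := by
  constructor
  intro σ
  have : ({σ} : Set (Conf d)) = ⋂ j : Site d, {σ' : Conf d | σ' j = σ j} := by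
    ext σ'
    simp [funext_iff]
  rw [this]
  exact MeasurableSet.iInter fun j =>
    measurableSet_eq_fun (measurable_pi_apply j) measurable_const

theorem measurable_of_local {f : Conf d → ℝ} (hf : LocalFun f) : Measurable f := by
  obtain ⟨Δ, hΔ⟩ := hf
  have hrep : f = (fun x : ↥Δ → Bool => f (fill Δ x (fun _ => false)))
      ∘ (fun σ (j : ↥Δ) => σ j.1) := by
    funext σ
    refine hΔ σ _ fun j hj => ?_
    rw [fill_apply_mem _ _ hj]
  rw [hrep]
  have h1 : Measurable (fun σ : Conf d => fun j : ↥Δ => σ j.1) :=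
    measurable_pi_lambda _ fun j => measurable_pi_apply _
  exact (measurable_of_countable _).comp h1

theorem measurableSet_cylB (Λ : Finset (Site d)) (a : ↥Λ → Bool) :
    MeasurableSet (cylB Λ a) := by
  have : cylB Λ a = ⋂ j : ↥Λ, {σ : Conf d | σ j.1 = a j} := by
    ext σ; simp [cylB, Set.mem_iInter]
  rw [this]
  exact MeasurableSet.iInter fun j =>
    measurableSet_eq_fun (measurable_pi_apply j.1) measurable_const

theorem measurable_res (Λ : Finset (Site d)) :
    Measurable (fun σ : Conf d => fun j : {j : Site d // j ∉ Λ} => σ j.1) :=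
  measurable_pi_lambda _ fun j => measurable_pi_apply _

theorem outer_le (Λ : Finset (Site d)) :
    outer Λ ≤ (inferInstance : MeasurableSpace (Conf d)) :=
  (measurable_res Λ).comap_le

theorem integral_nuMeas (β h : ℝ) (k : Site d → ℝ) (Λ : Finset (Site d)) (τ : Conf d)
    {f : Conf d → ℝ} (hf : Measurable f) :
    ∫ σ, f σ ∂(nuMeas β h k Λ τ)
      = ∑ b : ↥Λ → Bool, nu β h k Λ τ b * f (fill Λ b τ) := by
  unfold nuMeas
  rw [integral_finset_sum_measure]
  · refine Finset.sum_congr rfl fun b _ => ?_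
    rw [integral_smul_measure, integral_dirac' f _ hf.stronglyMeasurable,
      ENNReal.toReal_ofReal (nu_nonneg β h Λ τ b), smul_eq_mul]
  · intro b _
    refine ⟨hf.aestronglyMeasurable, ?_⟩
    unfold MeasureTheory.HasFiniteIntegral
    rw [lintegral_smul_measure, lintegral_dirac' _ hf.enorm]
    exact ENNReal.mul_lt_top ENNReal.ofReal_lt_top enorm_lt_top

variable {k : Site d → ℝ} {K : Finset (Site d)} (hK : ∀ i, i ∉ K → k i = 0)

include hK in
theorem hamB_eq_of_agree (β h : ℝ) {Λ : Finset (Site d)} (b : ↥Λ → Bool) {τ₁ τ₂ : Conf d}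
    (hag : ∀ j, j ∉ Λ → j ∈ (SSet k K Λ).biUnion (Jset K) → τ₁ j = τ₂ j) :
    hamB β h k Λ b τ₁ = hamB β h k Λ b τ₂ := by
  rw [hamB_eq_sum hK, hamB_eq_sum hK]
  congr 1
  refine Finset.sum_congr rfl fun i hi => ?_
  have hfield : field k i (fill Λ b τ₁) = field k i (fill Λ b τ₂) := by
    refine field_congr hK fun j hj => ?_
    by_cases hjΛ : j ∈ Λ
    · rw [fill_apply_mem _ _ hjΛ, fill_apply_mem _ _ hjΛ]
    · rw [fill_apply_not_mem _ _ hjΛ, fill_apply_not_mem _ _ hjΛ]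
      exact hag j hjΛ (Finset.mem_biUnion.2 ⟨i, hi, hj⟩)
  rw [hfield]

include hK in
set_option maxHeartbeats 1000000 in
theorem gibbsWB_eq_of_agree (β h : ℝ) {Λ : Finset (Site d)} (a : ↥Λ → Bool) {τ₁ τ₂ : Conf d}
    (hag : ∀ j, j ∉ Λ → j ∈ (SSet k K Λ).biUnion (Jset K) → τ₁ j = τ₂ j) :
    gibbsWB β h k Λ a τ₁ = gibbsWB β h k Λ a τ₂ := by
  have hnum := hamB_eq_of_agree hK β h a hag
  have hden : ∑ b : ↥Λ → Bool, Real.exp (-hamB β h k Λ b τ₁)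
      = ∑ b : ↥Λ → Bool, Real.exp (-hamB β h k Λ b τ₂) :=
    Finset.sum_congr rfl fun b _ => by rw [hamB_eq_of_agree hK β h b hag]
  simp only [gibbsWB, hnum, hden]

include hK in
theorem gibbsWB_local (β h : ℝ) (Λ : Finset (Site d)) (a : ↥Λ → Bool) :
    LocalFun (fun τ' => gibbsWB β h k Λ a τ') := by
  refine ⟨(SSet k K Λ).biUnion (Jset K), fun τ₁ τ₂ hagree => ?_⟩
  exact gibbsWB_eq_of_agree hK β h a fun j _ hj => hagree j hj

end Aux4
section Aux5

variable {d : ℕ} {k : Site d → ℝ} {K : Finset (Site d)} (hK : ∀ i, i ∉ K → k i = 0)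

theorem fill_glue_agree_outside {Λ Λ' : Finset (Site d)} (hsub : Λ ⊆ Λ')
    (a a' : ↥Λ → Bool) (c : ↥(Λ' \ Λ) → Bool) (τ : Conf d) {j : Site d} (hj : j ∉ Λ) :
    fill Λ' (glue hsub a' c) τ j = fill Λ' (glue hsub a c) τ j := by
  by_cases hj' : j ∈ Λ'
  · rw [fill_glue_sdiff hsub a' c τ (Finset.mem_sdiff.2 ⟨hj', hj⟩),
      fill_glue_sdiff hsub a c τ (Finset.mem_sdiff.2 ⟨hj', hj⟩)]
  · rw [fill_glue_not_mem hsub a' c τ hj', fill_glue_not_mem hsub a c τ hj']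

include hK in
set_option maxHeartbeats 1000000 in
theorem finvol (β h : ℝ) {Λ Λ' Δb : Finset (Site d)} (hsub : Λ ⊆ Λ')
    (hS : SSet k K Λ ⊆ Λ') (hJ : ∀ i ∈ Λ, Jset K i ⊆ Λ') (τ : Conf d)
    (a : ↥Λ → Bool) {B : Set (Conf d)}
    (hdisj : ∀ j ∈ Δb, j ∉ Λ)
    (hBdep : ∀ σ σ' : Conf d, (∀ j ∈ Δb, σ j = σ' j) → (σ ∈ B ↔ σ' ∈ B)) :
    ∑ b : ↥Λ' → Bool, nu β h k Λ' τ b * Set.indicator (cylB Λ a ∩ B) 1 (fill Λ' b τ)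
      = ∑ b : ↥Λ' → Bool, nu β h k Λ' τ b
          * Set.indicator B (fun τ' => gibbsWB β h k Λ a τ') (fill Λ' b τ) := by
  classical
  have hform : ∀ (g : Conf d → ℝ),
      ∑ b : ↥Λ' → Bool, nu β h k Λ' τ b * g (fill Λ' b τ)
        = (∑ b : ↥Λ' → Bool, nuNum β h k Λ' τ b * g (fill Λ' b τ))
            / ∑ b : ↥Λ' → Bool, nuNum β h k Λ' τ b := by
    intro g
    rw [Finset.sum_div]
    exact Finset.sum_congr rfl fun b _ => by rw [nu, div_mul_eq_mul_div]
  rw [hform, hform]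
  congr 1
  rw [sum_glue hsub, sum_glue hsub, Finset.sum_comm, Finset.sum_comm
    (f := fun (a' : ↥Λ → Bool) (c : ↥(Λ' \ Λ) → Bool) => nuNum β h k Λ' τ (glue hsub a' c)
      * Set.indicator B (fun τ' => gibbsWB β h k Λ a τ') (fill Λ' (glue hsub a' c) τ))]
  refine Finset.sum_congr rfl fun c _ => ?_
  have hagree : ∀ a' : ↥Λ → Bool, ∀ j, j ∉ Λ →
      fill Λ' (glue hsub a' c) τ j = fill Λ' (glue hsub a c) τ j :=
    fun a' j hj => fill_glue_agree_outside hsub a a' c τ hj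
  have hmemB : ∀ a' : ↥Λ → Bool,
      (fill Λ' (glue hsub a' c) τ ∈ B) ↔ (fill Λ' (glue hsub a c) τ ∈ B) :=
    fun a' => hBdep _ _ (fun j hj => hagree a' j (hdisj j hj))
  have hcyl : ∀ a' : ↥Λ → Bool,
      (fill Λ' (glue hsub a' c) τ ∈ cylB Λ a) ↔ a' = a := by
    intro a'
    constructor
    · intro hc
      funext j
      have := hc j
      rwa [fill_glue_mem hsub a' c τ j.2, Subtype.coe_eta] at this
    · rintro rfl
      intro j
      rw [fill_glue_mem hsub a' c τ j.2, Subtype.coe_eta]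
  have hgibbs : ∀ a' : ↥Λ → Bool,
      gibbsWB β h k Λ a (fill Λ' (glue hsub a' c) τ)
        = gibbsWB β h k Λ a (fill Λ' (glue hsub a c) τ) :=
    fun a' => gibbsWB_eq_of_agree hK β h a (fun j hj _ => hagree a' j hj)
  by_cases hB : fill Λ' (glue hsub a c) τ ∈ B
  · -- LHS: only `a' = a` contributes
    have hL : ∀ a' : ↥Λ → Bool,
        nuNum β h k Λ' τ (glue hsub a' c)
            * Set.indicator (cylB Λ a ∩ B) 1 (fill Λ' (glue hsub a' c) τ)
          = if a' = a then nuNum β h k Λ' τ (glue hsub a c) else 0 := by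
      intro a'
      by_cases ha' : a' = a
      · subst ha'
        rw [Set.indicator_of_mem (Set.mem_inter ((hcyl a').2 rfl) ((hmemB a').2 hB)), Pi.one_apply,
          mul_one, if_pos rfl]
      · rw [Set.indicator_of_notMem (fun hc => ha' ((hcyl a').1 hc.1)), mul_zero,
          if_neg ha']
    have hR : ∀ a' : ↥Λ → Bool,
        nuNum β h k Λ' τ (glue hsub a' c)
            * Set.indicator B (fun τ' => gibbsWB β h k Λ a τ') (fill Λ' (glue hsub a' c) τ)
          = nuNum β h k Λ' τ (glue hsub a' c)
              * gibbsWB β h k Λ a (fill Λ' (glue hsub a c) τ) := by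
      intro a'
      rw [Set.indicator_of_mem ((hmemB a').2 hB), hgibbs a']
    simp only [hL, hR]
    rw [Finset.sum_ite_eq' Finset.univ a
      (fun _ => nuNum β h k Λ' τ (glue hsub a c)), if_pos (Finset.mem_univ a),
      ← Finset.sum_mul, gibbsWB_mul_sum hK β h hsub hS hJ τ a c]
  · -- both sides vanish
    have hL : ∀ a' : ↥Λ → Bool,
        nuNum β h k Λ' τ (glue hsub a' c)
            * Set.indicator (cylB Λ a ∩ B) 1 (fill Λ' (glue hsub a' c) τ) = 0 := by
      intro a'
      rw [Set.indicator_of_notMem (fun hc => hB ((hmemB a').1 hc.2)), mul_zero]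
    have hR : ∀ a' : ↥Λ → Bool,
        nuNum β h k Λ' τ (glue hsub a' c)
            * Set.indicator B (fun τ' => gibbsWB β h k Λ a τ') (fill Λ' (glue hsub a' c) τ)
          = 0 := by
      intro a'
      rw [Set.indicator_of_notMem (fun hc => hB ((hmemB a').1 hc)), mul_zero]
    simp only [hL, hR]

end Aux5
section Aux6

variable {d : ℕ}

theorem mem_boxCc {n : ℕ} {i : Site d} : i ∈ boxCc n ↔ ∀ t, |i t| ≤ (n : ℤ) := by
  simp [boxCc, Fintype.mem_piFinset, abs_le]

theorem boxCc_mono {m n : ℕ} (hmn : m ≤ n) : (boxCc m : Finset (Site d)) ⊆ boxCc n := by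
  intro i hi
  rw [mem_boxCc] at hi ⊢
  exact fun t => le_trans (hi t) (by exact_mod_cast hmn)

theorem finset_subset_boxCc (Λ : Finset (Site d)) : ∃ n : ℕ, Λ ⊆ boxCc n := by
  classical
  refine ⟨Λ.sup (fun i => Finset.univ.sup fun t => (i t).natAbs), fun i hi => ?_⟩
  rw [mem_boxCc]
  intro t
  have h1 : (i t).natAbs ≤ Finset.univ.sup fun t => (i t).natAbs :=
    Finset.le_sup (f := fun t => (i t).natAbs) (Finset.mem_univ t)
  have h2 : (Finset.univ.sup fun t => (i t).natAbs)
      ≤ Λ.sup (fun i => Finset.univ.sup fun t => (i t).natAbs) :=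
    Finset.le_sup (f := fun i : Site d => Finset.univ.sup fun t => (i t).natAbs) hi
  rw [Int.abs_eq_natAbs]
  exact_mod_cast le_trans h1 h2

theorem Jset_subset_boxCc {K : Finset (Site d)} {m p : ℕ} (hKm : K ⊆ boxCc m)
    {i : Site d} (hi : i ∈ boxCc p) : Jset K i ⊆ boxCc (p + m) := by
  intro j hj
  have hK' : i - j ∈ boxCc m := hKm (mem_Jset.1 hj)
  rw [mem_boxCc] at hi hK' ⊢
  intro t
  have : j t = i t - (i - j) t := by simp
  rw [this]
  calc |i t - (i - j) t| ≤ |i t| + |(i - j) t| := abs_sub _ _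
    _ ≤ (p : ℤ) + m := add_le_add (hi t) (hK' t)
    _ = ((p + m : ℕ) : ℤ) := by push_cast; ring

theorem SSet_subset_boxCc {k : Site d → ℝ} {K : Finset (Site d)}
    (hK : ∀ i, i ∉ K → k i = 0) {Λ : Finset (Site d)} {m p : ℕ}
    (hKm : K ⊆ boxCc m) (hΛ : Λ ⊆ boxCc p) : SSet k K Λ ⊆ boxCc (p + m) := by
  intro i hi
  obtain ⟨j, hjΛ, hkj⟩ := (mem_SSet hK).1 hi
  have hij : i - j ∈ boxCc m := hKm (by by_contra hc; exact hkj (hK _ hc))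
  have hj : j ∈ boxCc p := hΛ hjΛ
  rw [mem_boxCc] at hij hj ⊢
  intro t
  have : i t = (i - j) t + j t := by simp
  rw [this]
  calc |(i - j) t + j t| ≤ |(i - j) t| + |j t| := abs_add_le _ _
    _ ≤ (m : ℤ) + p := add_le_add (hij t) (hj t)
    _ = ((p + m : ℕ) : ℤ) := by push_cast; ring

theorem k_support_box {R : ℝ} (hR : 0 < R) {k : Site d → ℝ}
    (hrange : ∀ i : Site d, R ^ 2 < (normSq i : ℝ) → k i = 0) :
    ∀ i : Site d, i ∉ (boxCc ⌈R⌉₊ : Finset (Site d)) → k i = 0 := by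
  intro i hi
  refine hrange i ?_
  rw [mem_boxCc] at hi
  push_neg at hi
  obtain ⟨t, ht⟩ := hi
  have h1 : (R : ℝ) < |(i t : ℝ)| := by
    have : (⌈R⌉₊ : ℤ) < |i t| := ht
    have h2 : ((⌈R⌉₊ : ℤ) : ℝ) < |(i t : ℝ)| := by
      rw [← Int.cast_abs]
      exact_mod_cast this
    calc R ≤ (⌈R⌉₊ : ℝ) := Nat.le_ceil R
      _ < _ := by exact_mod_cast h2
  have h3 : R ^ 2 < ((i t : ℝ)) ^ 2 := by
    nlinarith [sq_abs ((i t : ℝ)), abs_nonneg ((i t : ℝ))]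
  have h4 : ((i t : ℝ)) ^ 2 ≤ (normSq i : ℝ) := by
    have : (normSq i : ℝ) = ∑ s, ((i s : ℝ)) ^ 2 := by
      unfold normSq; push_cast; rfl
    rw [this]
    exact Finset.single_le_sum (f := fun s => ((i s : ℝ)) ^ 2)
      (fun s _ => sq_nonneg _) (Finset.mem_univ t)
  linarith

end Aux6
section Aux7

variable {d : ℕ} {k : Site d → ℝ} {K : Finset (Site d)} (hK : ∀ i, i ∉ K → k i = 0)

include hK in
set_option maxHeartbeats 1000000 in
theorem key_dlr (β h : ℝ) (τ : Conf d) (μ : Measure (Conf d)) [IsProbabilityMeasure μ]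
    (φ : ℕ → ℕ) (hφ : StrictMono φ)
    (hlim : ∀ f : Conf d → ℝ, LocalFun f →
      Tendsto (fun n => ∫ σ, f σ ∂(nuMeas β h k (boxCc (φ n)) τ)) atTop
        (nhds (∫ σ, f σ ∂μ)))
    {m : ℕ} (hKm : K ⊆ boxCc m)
    (Λ : Finset (Site d)) (a : ↥Λ → Bool) (Δb : Finset (Site d)) (B : Set (Conf d))
    (hdisj : ∀ j ∈ Δb, j ∉ Λ)
    (hBdep : ∀ σ σ' : Conf d, (∀ j ∈ Δb, σ j = σ' j) → (σ ∈ B ↔ σ' ∈ B))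
    (hBmeas : MeasurableSet B) :
    μ (cylB Λ a ∩ B) = ∫⁻ τ' in B, ENNReal.ofReal (gibbsWB β h k Λ a τ') ∂μ := by
  classical
  set F : Conf d → ℝ := Set.indicator (cylB Λ a ∩ B) 1 with hF
  set G : Conf d → ℝ := Set.indicator B (fun τ' => gibbsWB β h k Λ a τ') with hG
  have hFloc : LocalFun F := by
    refine ⟨Λ ∪ Δb, fun σ σ' hag => ?_⟩
    have hc : ∀ j : ↥Λ, σ j.1 = σ' j.1 :=
      fun j => hag j.1 (Finset.mem_union_left _ j.2)
    have hcyl : σ ∈ cylB Λ a ↔ σ' ∈ cylB Λ a := by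
      constructor <;> intro hx j
      · rw [← hc j]; exact hx j
      · rw [hc j]; exact hx j
    have hmB : σ ∈ B ↔ σ' ∈ B :=
      hBdep σ σ' (fun j hj => hag j (Finset.mem_union_right _ hj))
    by_cases hx : σ ∈ cylB Λ a ∩ B
    · rw [hF, Set.indicator_of_mem hx,
        Set.indicator_of_mem (Set.mem_inter (hcyl.1 hx.1) (hmB.1 hx.2)), Pi.one_apply,
        Pi.one_apply]
    · rw [hF, Set.indicator_of_notMem hx,
        Set.indicator_of_notMem (fun hc' => hx ⟨hcyl.2 hc'.1, hmB.2 hc'.2⟩)]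
  have hGloc : LocalFun G := by
    refine ⟨Δb ∪ (SSet k K Λ).biUnion (Jset K), fun σ σ' hag => ?_⟩
    have hmB : σ ∈ B ↔ σ' ∈ B :=
      hBdep σ σ' (fun j hj => hag j (Finset.mem_union_left _ hj))
    have hgw : gibbsWB β h k Λ a σ = gibbsWB β h k Λ a σ' :=
      gibbsWB_eq_of_agree hK β h a (fun j _ hj => hag j (Finset.mem_union_right _ hj))
    by_cases hx : σ ∈ B
    · rw [hG, Set.indicator_of_mem hx, Set.indicator_of_mem (hmB.1 hx), hgw]
    · rw [hG, Set.indicator_of_notMem hx,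
        Set.indicator_of_notMem (fun h' => hx (hmB.2 h'))]
  have hFmeas : Measurable F := measurable_of_local hFloc
  have hGmeas : Measurable G := measurable_of_local hGloc
  obtain ⟨n₀, hn₀⟩ := finset_subset_boxCc (Λ ∪ Δb)
  have hΛn₀ : Λ ⊆ boxCc n₀ := fun i hi => hn₀ (Finset.mem_union_left _ hi)
  have hev : ∀ n, n₀ + m ≤ n →
      ∫ σ, F σ ∂(nuMeas β h k (boxCc (φ n)) τ)
        = ∫ σ, G σ ∂(nuMeas β h k (boxCc (φ n)) τ) := by
    intro n hn
    have hφn : n₀ + m ≤ φ n := le_trans hn hφ.le_apply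
    have hsub : Λ ⊆ boxCc (φ n) :=
      hΛn₀.trans (boxCc_mono (le_trans (Nat.le_add_right _ _) hφn))
    have hS : SSet k K Λ ⊆ boxCc (φ n) :=
      (SSet_subset_boxCc hK hKm hΛn₀).trans (boxCc_mono hφn)
    have hJ : ∀ i ∈ Λ, Jset K i ⊆ boxCc (φ n) := fun i hi =>
      (Jset_subset_boxCc hKm (hΛn₀ hi)).trans (boxCc_mono hφn)
    rw [integral_nuMeas β h k _ τ hFmeas, integral_nuMeas β h k _ τ hGmeas]
    exact finvol hK β h hsub hS hJ τ a hdisj hBdep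
  have heq : ∫ σ, F σ ∂μ = ∫ σ, G σ ∂μ := by
    refine tendsto_nhds_unique ((hlim F hFloc).congr' ?_) (hlim G hGloc)
    filter_upwards [eventually_ge_atTop (n₀ + m)] with n hn
    exact hev n hn
  have hL : μ (cylB Λ a ∩ B) = ENNReal.ofReal (∫ σ, F σ ∂μ) := by
    rw [hF, integral_indicator_one ((measurableSet_cylB Λ a).inter hBmeas),
      measureReal_def, ENNReal.ofReal_toReal (measure_ne_top μ _)]
  have hGnonneg : ∀ σ, 0 ≤ gibbsWB β h k Λ a σ := gibbsWB_nonneg β h Λ a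
  have hInt : Integrable (fun τ' => gibbsWB β h k Λ a τ') (μ.restrict B) := by
    refine Integrable.mono' (integrable_const 1)
      (measurable_of_local (gibbsWB_local hK β h Λ a)).aestronglyMeasurable ?_
    refine ae_of_all _ fun σ => ?_
    rw [Real.norm_eq_abs, abs_of_nonneg (hGnonneg σ)]
    exact gibbsWB_le_one β h Λ a σ
  have hR : ∫⁻ τ' in B, ENNReal.ofReal (gibbsWB β h k Λ a τ') ∂μ
      = ENNReal.ofReal (∫ σ, G σ ∂μ) := by
    rw [hG, integral_indicator hBmeas,
      MeasureTheory.ofReal_integral_eq_lintegral_ofReal hInt (ae_of_all _ hGnonneg)]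
  rw [hL, heq, ← hR]

end Aux7
/-- Any weak limit point `μ` of the finite volume stationary measures
`ν_Λ^τ` as `Λ ↑ ℤ^d` (along hypercubes) is a Gibbs measure for the potential
`Φ_{{i}}(σ) = -βhσ_i`, `Φ_{U_i}(σ) = -log cosh(β Σ_j k(i-j)σ_j + βh)`,
`U_i = {j : k(i-j) ≠ 0}`, `Φ_A = 0` otherwise. -/
theorem stmt8 {d : ℕ} (hd : 0 < d) (β h R : ℝ) (hβ : 0 < β) (hR : 0 < R)
    (k : Site d → ℝ) (hsym : ∀ i : Site d, k (-i) = k i)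
    (hrange : ∀ i : Site d, R ^ 2 < (normSq i : ℝ) → k i = 0)
    (τ : Conf d)
    (μ : Measure (Conf d)) [IsProbabilityMeasure μ]
    (φ : ℕ → ℕ) (hφ : StrictMono φ)
    (hlim : ∀ f : Conf d → ℝ, LocalFun f →
      Tendsto (fun n => ∫ σ, f σ ∂(nuMeas β h k (boxCc (φ n)) τ)) atTop
        (nhds (∫ σ, f σ ∂μ))) :
    IsGibbsB β h k μ := by
  classical
  have hK : ∀ i, i ∉ (boxCc ⌈R⌉₊ : Finset (Site d)) → k i = 0 := k_support_box hR hrange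
  intro Λ a B hB
  -- the key identity for sets depending on finitely many spins outside `Λ`
  have key : ∀ (Δb : Finset (Site d)) (B' : Set (Conf d)), (∀ j ∈ Δb, j ∉ Λ) →
      (∀ σ σ' : Conf d, (∀ j ∈ Δb, σ j = σ' j) → (σ ∈ B' ↔ σ' ∈ B')) →
      MeasurableSet B' →
      μ (cylB Λ a ∩ B') = ∫⁻ τ' in B', ENNReal.ofReal (gibbsWB β h k Λ a τ') ∂μ :=
    fun Δb B' hd' hdep hm =>
      key_dlr hK β h τ μ φ hφ hlim (Finset.Subset.refl _) Λ a Δb B' hd' hdep hm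
  -- represent `B` as the preimage of a measurable set under the outer restriction map
  rw [show outer Λ = MeasurableSpace.comap
      (fun σ (j : {j : Site d // j ∉ Λ}) => σ j.1) MeasurableSpace.pi from rfl] at hB
  obtain ⟨T, hT, rfl⟩ := MeasurableSpace.measurableSet_comap.1 hB
  set res : Conf d → ({j : Site d // j ∉ Λ} → Bool) :=
    fun σ (j : {j : Site d // j ∉ Λ}) => σ j.1 with hres
  -- the two finite measures on the outer configuration space
  set g : Conf d → ENNReal := fun τ' => ENNReal.ofReal (gibbsWB β h k Λ a τ') with hg
  haveI hwd : IsFiniteMeasure (μ.withDensity g) := by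
    constructor
    rw [withDensity_apply _ MeasurableSet.univ, Measure.restrict_univ]
    calc ∫⁻ τ', g τ' ∂μ ≤ ∫⁻ _, 1 ∂μ := by
          refine lintegral_mono fun σ => ?_
          exact ENNReal.ofReal_le_one.2 (gibbsWB_le_one β h Λ a σ)
      _ = μ Set.univ := by simp
      _ < ⊤ := measure_lt_top μ _
  set μ₁ : Measure ({j : Site d // j ∉ Λ} → Bool) :=
    Measure.map res (μ.restrict (cylB Λ a)) with hμ₁
  set μ₂ : Measure ({j : Site d // j ∉ Λ} → Bool) :=
    Measure.map res (μ.withDensity g) with hμ₂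
  -- each measurable cylinder of the outer space satisfies the identity
  have hcyl_eq : ∀ s ∈ measurableCylinders (fun _ : {j : Site d // j ∉ Λ} => Bool),
      μ₁ s = μ₂ s := by
    intro s hs
    have hsm : MeasurableSet s := MeasurableSet.of_mem_measurableCylinders hs
    obtain ⟨Δfin, S, hS, rfl⟩ := (mem_measurableCylinders s).1 hs
    have hpre : MeasurableSet (res ⁻¹' cylinder Δfin S) := (measurable_res Λ) hsm
    rw [hμ₁, hμ₂, Measure.map_apply (measurable_res Λ) hsm,
      Measure.map_apply (measurable_res Λ) hsm,
      Measure.restrict_apply hpre, withDensity_apply _ hpre, Set.inter_comm]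
    refine key (Δfin.image Subtype.val) _ ?_ ?_ hpre
    · intro j hj
      obtain ⟨j', _, rfl⟩ := Finset.mem_image.1 hj
      exact j'.2
    · intro σ σ' hag
      have : res σ ∘ (Subtype.val : ↥Δfin → {j : Site d // j ∉ Λ})
          = res σ' ∘ Subtype.val := by
        funext j
        exact hag j.1.1 (Finset.mem_image.2 ⟨j.1, j.2, rfl⟩)
      simp only [Set.mem_preimage, mem_cylinder]
      have hres_eq : Δfin.restrict (res σ) = Δfin.restrict (res σ') := by
        funext j
        exact congrFun this j
      rw [hres_eq]
  -- the cylinders form a π-system generating the outer σ-algebra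
  have hμeq : μ₁ = μ₂ := by
    refine ext_of_generate_finite
      (measurableCylinders (fun _ : {j : Site d // j ∉ Λ} => Bool))
      generateFrom_measurableCylinders.symm isPiSystem_measurableCylinders hcyl_eq ?_
    have huniv : μ (cylB Λ a ∩ Set.univ) = ∫⁻ τ' in Set.univ, g τ' ∂μ := by
      refine key ∅ Set.univ (by simp) (by simp) MeasurableSet.univ
    rw [hμ₁, hμ₂, Measure.map_apply (measurable_res Λ) MeasurableSet.univ,
      Measure.map_apply (measurable_res Λ) MeasurableSet.univ, Set.preimage_univ,
      Measure.restrict_apply MeasurableSet.univ, withDensity_apply _ MeasurableSet.univ,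
      Set.univ_inter]
    rw [Set.inter_univ] at huniv
    rw [huniv, Measure.restrict_univ]
  -- evaluate both measures at `T`
  have hpreT : MeasurableSet (res ⁻¹' T) := (measurable_res Λ) hT
  have h1 : μ₁ T = μ (cylB Λ a ∩ res ⁻¹' T) := by
    rw [hμ₁, Measure.map_apply (measurable_res Λ) hT, Measure.restrict_apply hpreT,
      Set.inter_comm]
  have h2 : μ₂ T = ∫⁻ τ' in res ⁻¹' T, g τ' ∂μ := by
    rw [hμ₂, Measure.map_apply (measurable_res Λ) hT, withDensity_apply _ hpreT]
  rw [← h1, hμeq, h2]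

end
end PCA
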